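/- Let r ∈ (0,∞) and let μ be a Borel probability measure on ℝ^q with compact support K. Then D̲_r(μ) ≤ lower box dimension of K and D̄_r(μ) ≤ upper box dimension of K, where for ε > 0, N(K,ε) denotes the minimal number of closed balls of radius ε needed to cover K, the lower box dimension of K is liminf_{ε→0} log N(K,ε)/(−log ε), and the upper box dimension of K is limsup_{ε→0} log N(K,ε)/(−log ε). -/

import Mathlib

open MeasureTheory Filter Metric
open scoped ENNReal NNReal

/-- The `n`-th quantization error of order `r` for a measure `P`:
`e_{n,r}(P) = inf { (∫ d(x,α)^r dP)^{1/r} : α ⊆ E, 1 ≤ card α ≤ n }`. -/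
noncomputable def quantError {E : Type*} [MetricSpace E] [MeasurableSpace E]
    (P : Measure E) (r : ℝ) (n : ℕ) : ℝ :=
  sInf {e : ℝ | ∃ α : Finset E, 1 ≤ α.card ∧ α.card ≤ n ∧
    e = (∫ x, infDist x (↑α : Set E) ^ r ∂P) ^ (1 / r)}

/-- The upper quantization dimension of order `r`. -/
noncomputable def upperQuantDim {E : Type*} [MetricSpace E] [MeasurableSpace E]
    (P : Measure E) (r : ℝ) : ℝ :=
  limsup (fun n : ℕ => Real.log n / (- Real.log (quantError P r n))) atTop

/-- The lower quantization dimension of order `r`. -/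
noncomputable def lowerQuantDim {E : Type*} [MetricSpace E] [MeasurableSpace E]
    (P : Measure E) (r : ℝ) : ℝ :=
  liminf (fun n : ℕ => Real.log n / (- Real.log (quantError P r n))) atTop

/-- The `s`-dimensional upper quantization coefficient of order `r`. -/
noncomputable def upperQuantCoeff {E : Type*} [MetricSpace E] [MeasurableSpace E]
    (P : Measure E) (r s : ℝ) : ℝ≥0∞ :=
  limsup (fun n : ℕ => ENNReal.ofReal ((n : ℝ) ^ (1 / s) * quantError P r n)) atTop

/-- The `s`-dimensional lower quantization coefficient of order `r`. -/
noncomputable def lowerQuantCoeff {E : Type*} [MetricSpace E] [MeasurableSpace E]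
    (P : Measure E) (r s : ℝ) : ℝ≥0∞ :=
  liminf (fun n : ℕ => ENNReal.ofReal ((n : ℝ) ^ (1 / s) * quantError P r n)) atTop

/-- `N(K,ε)`: the minimal number of closed balls of radius `ε` needed to cover `K`. -/
noncomputable def coverNum {E : Type*} [MetricSpace E] (K : Set E) (ε : ℝ) : ℕ :=
  sInf {n : ℕ | ∃ t : Finset E, t.card ≤ n ∧ K ⊆ ⋃ x ∈ t, closedBall x ε}

/-- The lower box (Minkowski) dimension `liminf_{ε→0⁺} log N(K,ε)/(-log ε)`. -/
noncomputable def lowerBoxDim {E : Type*} [MetricSpace E] (K : Set E) : ℝ :=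
  liminf (fun ε : ℝ => Real.log (coverNum K ε) / (- Real.log ε)) (nhdsWithin 0 (Set.Ioi 0))

/-- The upper box (Minkowski) dimension `limsup_{ε→0⁺} log N(K,ε)/(-log ε)`. -/
noncomputable def upperBoxDim {E : Type*} [MetricSpace E] (K : Set E) : ℝ :=
  limsup (fun ε : ℝ => Real.log (coverNum K ε) / (- Real.log ε)) (nhdsWithin 0 (Set.Ioi 0))

/- ### Auxiliary lemmas -/

lemma quantError_nonneg {E : Type*} [MetricSpace E] [MeasurableSpace E]
    (P : Measure E) (r : ℝ) (n : ℕ) : 0 ≤ quantError P r n := by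
  apply Real.sInf_nonneg
  rintro e ⟨α, -, -, rfl⟩
  exact Real.rpow_nonneg (integral_nonneg fun x => Real.rpow_nonneg infDist_nonneg r) _

lemma coverNum_setNonempty {E : Type*} [MetricSpace E] {K : Set E} (hKc : IsCompact K)
    {ε : ℝ} (hε : 0 < ε) :
    {n : ℕ | ∃ t : Finset E, t.card ≤ n ∧ K ⊆ ⋃ x ∈ t, closedBall x ε}.Nonempty := by
  obtain ⟨t, ht⟩ := hKc.elim_finite_subcover (fun x : E => ball x ε)
    (fun x => isOpen_ball) (fun x hx => Set.mem_iUnion.2 ⟨x, mem_ball_self hε⟩)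
  exact ⟨t.card, t, le_rfl, ht.trans (Set.iUnion₂_mono fun x _ => ball_subset_closedBall)⟩

lemma coverNum_spec {E : Type*} [MetricSpace E] {K : Set E} (hKc : IsCompact K)
    {ε : ℝ} (hε : 0 < ε) :
    ∃ t : Finset E, t.card ≤ coverNum K ε ∧ K ⊆ ⋃ x ∈ t, closedBall x ε :=
  Nat.sInf_mem (coverNum_setNonempty hKc hε)

lemma coverNum_le {E : Type*} [MetricSpace E] {K : Set E} {ε : ℝ} (t : Finset E)
    (h : K ⊆ ⋃ x ∈ t, closedBall x ε) : coverNum K ε ≤ t.card :=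
  Nat.sInf_le ⟨t, le_rfl, h⟩

lemma one_le_coverNum {E : Type*} [MetricSpace E] {K : Set E} (hK : K.Nonempty)
    (hKc : IsCompact K) {ε : ℝ} (hε : 0 < ε) : 1 ≤ coverNum K ε := by
  obtain ⟨t, htc, hcov⟩ := coverNum_spec hKc hε
  obtain ⟨x, hx⟩ := hK
  obtain ⟨y, hy, -⟩ := Set.mem_iUnion₂.1 (hcov hx)
  calc 1 ≤ t.card := Finset.card_pos.2 ⟨y, hy⟩
    _ ≤ coverNum K ε := htc

lemma quantError_le_of_cover {E : Type*} [MetricSpace E] [MeasurableSpace E]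
    [OpensMeasurableSpace E] (P : Measure E) [IsProbabilityMeasure P] {r : ℝ} (hr : 0 < r)
    {K : Set E} (hμK : P Kᶜ = 0) {ε : ℝ} (hε : 0 < ε) {n : ℕ} (t : Finset E)
    (htn : 1 ≤ t.card) (htc : t.card ≤ n) (hcov : K ⊆ ⋃ x ∈ t, closedBall x ε) :
    quantError P r n ≤ ε := by
  have hbb : BddBelow {e : ℝ | ∃ α : Finset E, 1 ≤ α.card ∧ α.card ≤ n ∧
      e = (∫ x, infDist x (↑α : Set E) ^ r ∂P) ^ (1 / r)} := by
    refine ⟨0, ?_⟩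
    rintro e ⟨α, -, -, rfl⟩
    exact Real.rpow_nonneg (integral_nonneg fun x => Real.rpow_nonneg infDist_nonneg r) _
  have hmem : (∫ x, infDist x (↑t : Set E) ^ r ∂P) ^ (1 / r) ∈
      {e : ℝ | ∃ α : Finset E, 1 ≤ α.card ∧ α.card ≤ n ∧
      e = (∫ x, infDist x (↑α : Set E) ^ r ∂P) ^ (1 / r)} := ⟨t, htn, htc, rfl⟩
  refine le_trans (csInf_le hbb hmem) ?_
  have hK : ∀ᵐ x ∂P, x ∈ K := by
    rw [ae_iff]
    exact hμK
  have hbound : ∀ x ∈ K, infDist x (↑t : Set E) ^ r ≤ ε ^ r := by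
    intro x hx
    obtain ⟨y, hy, hxy⟩ := Set.mem_iUnion₂.1 (hcov hx)
    have h1 : infDist x (↑t : Set E) ≤ ε :=
      le_trans (infDist_le_dist_of_mem (by exact_mod_cast (Finset.mem_coe.2 hy))) hxy
    exact Real.rpow_le_rpow infDist_nonneg h1 hr.le
  have hcont : Continuous fun x : E => infDist x (↑t : Set E) ^ r :=
    (continuous_infDist_pt _).rpow_const (fun x => Or.inr hr.le)
  have hint : Integrable (fun x : E => infDist x (↑t : Set E) ^ r) P := by
    refine Integrable.mono' (integrable_const (ε ^ r)) hcont.aestronglyMeasurable ?_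
    filter_upwards [hK] with x hx
    rw [Real.norm_of_nonneg (Real.rpow_nonneg infDist_nonneg r)]
    exact hbound x hx
  have hle : (∫ x, infDist x (↑t : Set E) ^ r ∂P) ≤ ε ^ r := by
    calc (∫ x, infDist x (↑t : Set E) ^ r ∂P) ≤ ∫ _, ε ^ r ∂P := by
          refine integral_mono_ae hint (integrable_const _) ?_
          filter_upwards [hK] with x hx using hbound x hx
      _ = ε ^ r := by simp
  calc (∫ x, infDist x (↑t : Set E) ^ r ∂P) ^ (1 / r)
      ≤ (ε ^ r) ^ (1 / r) := Real.rpow_le_rpow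
        (integral_nonneg fun x => Real.rpow_nonneg infDist_nonneg r) hle (by positivity)
    _ = ε := by rw [one_div, Real.rpow_rpow_inv hε.le hr.ne']

lemma grid_cover (q : ℕ) (R : ℝ) (hR : 0 ≤ R) {ε : ℝ} (hε : 0 < ε) :
    ∃ t : Finset (EuclideanSpace ℝ (Fin q)),
      (t.card : ℝ) ≤ (2*R*(q+1)/ε + 5)^q ∧
      closedBall (0 : EuclideanSpace ℝ (Fin q)) R ⊆ ⋃ x ∈ t, closedBall x ε := by
  classical
  set c : ℝ := ε / (q+1) with hc
  have hq1 : (0:ℝ) < q + 1 := by positivity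
  have hcpos : 0 < c := by positivity
  set N : ℤ := ⌈R / c⌉ + 1 with hN
  have hNR : R / c ≤ (N : ℝ) - 1 := by
    have := Int.le_ceil (R / c)
    push_cast [hN]
    linarith
  have hNup : (N : ℝ) ≤ R / c + 2 := by
    have := Int.ceil_lt_add_one (R / c)
    push_cast [hN]
    linarith
  have hN1 : (1:ℝ) ≤ (N:ℝ) := by
    have : (0:ℝ) ≤ R / c := by positivity
    linarith
  set φ : (Fin q → ℤ) → EuclideanSpace ℝ (Fin q) := fun z => WithLp.toLp 2 (fun i => (z i : ℝ) * c) with hφ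
  refine ⟨Finset.image φ (Fintype.piFinset fun _ => Finset.Icc (-N) N), ?_, ?_⟩
  · calc ((Finset.image φ (Fintype.piFinset fun _ => Finset.Icc (-N) N)).card : ℝ)
        ≤ ((Fintype.piFinset fun _ : Fin q => Finset.Icc (-N) N).card : ℝ) := by
          exact_mod_cast Finset.card_image_le
      _ = ((Finset.Icc (-N) N).card : ℝ) ^ q := by
          rw [Fintype.card_piFinset]
          push_cast [Finset.prod_const]
          simp
      _ ≤ (2*R*(q+1)/ε + 5)^q := by
          apply pow_le_pow_left₀ (by positivity)
          rw [Int.card_Icc]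
          have hnn : (0:ℤ) ≤ N + 1 - -N := by
            have : (1:ℤ) ≤ N := by exact_mod_cast hN1
            omega
          have h1 : ((N + 1 - -N).toNat : ℝ) = 2 * (N:ℝ) + 1 := by
            have h : ((N + 1 - -N).toNat : ℤ) = 2*N + 1 := by omega
            exact_mod_cast h
          rw [h1]
          have h3 : R / c = R * (q+1) / ε := by rw [hc]; field_simp
          have h4 : 2*(R*(↑q+1)/ε) = 2*R*(↑q+1)/ε := by ring
          linarith [hNup, h3, h4]
  · intro x hx
    rw [mem_closedBall, dist_zero_right] at hx
    have hcoord : ∀ i, |x i| ≤ R := by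
      intro i
      have hnorm := EuclideanSpace.norm_eq x
      have hsum : ‖x i‖^2 ≤ ∑ j, ‖x j‖^2 :=
        Finset.single_le_sum (f := fun j => ‖x j‖^2) (fun j _ => by positivity)
          (Finset.mem_univ i)
      have : |x i| ≤ ‖x‖ := by
        rw [hnorm]
        calc |x i| = Real.sqrt (‖x i‖^2) := by
              rw [Real.sqrt_sq_eq_abs]; simp [abs_abs]
          _ ≤ _ := Real.sqrt_le_sqrt hsum
      linarith
    set z : Fin q → ℤ := fun i => round (x i / c) with hz
    have hmem : z ∈ Fintype.piFinset fun _ : Fin q => Finset.Icc (-N) N := by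
      rw [Fintype.mem_piFinset]
      intro i
      rw [Finset.mem_Icc, ← abs_le]
      have h5 : |x i / c - round (x i / c)| ≤ 1/2 := abs_sub_round _
      have h6 : |(z i : ℝ)| ≤ |x i / c| + 1/2 := by
        have hzz : (z i : ℝ) = x i / c - (x i / c - round (x i / c)) := by simp [hz]
        rw [hzz]
        calc |x i / c - (x i / c - round (x i / c))| ≤ |x i / c| + |x i / c - round (x i / c)| :=
              abs_sub _ _
          _ ≤ |x i / c| + 1/2 := by linarith
      have h7 : |x i / c| ≤ R / c := by
        rw [abs_div, abs_of_pos hcpos]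
        gcongr
        exact hcoord i
      have h9 : |(z i : ℝ)| ≤ (N : ℝ) := by linarith
      exact_mod_cast h9
    refine Set.mem_iUnion₂.2 ⟨φ z, Finset.mem_image_of_mem φ hmem, ?_⟩
    rw [mem_closedBall, EuclideanSpace.dist_eq]
    have hterm : ∀ i, dist (x i) (φ z i) ^ 2 ≤ c^2 := by
      intro i
      have hd : dist (x i) (φ z i) = |x i - (z i : ℝ) * c| := Real.dist_eq _ _
      rw [hd]
      have h8 : x i - (z i : ℝ) * c = (x i / c - round (x i / c)) * c := by
        field_simp [hz]
        ring
      rw [h8, abs_mul, abs_of_pos hcpos, mul_pow]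
      have h5 : |x i / c - round (x i / c)| ≤ 1/2 := abs_sub_round _
      have h6 : |x i / c - round (x i / c)|^2 ≤ (1/2)^2 :=
        pow_le_pow_left₀ (abs_nonneg _) h5 2
      nlinarith [sq_nonneg c]
    calc Real.sqrt (∑ i, dist (x i) (φ z i) ^ 2) ≤ Real.sqrt (q * c^2) := by
          apply Real.sqrt_le_sqrt
          calc (∑ i, dist (x i) (φ z i) ^ 2) ≤ ∑ _i : Fin q, c^2 :=
                Finset.sum_le_sum fun i _ => hterm i
            _ = q * c^2 := by simp [Finset.sum_const, mul_comm]
      _ ≤ ε := by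
          rw [show ε = (q+1) * c by rw [hc]; field_simp]
          rw [show ((q:ℝ)+1) * c = Real.sqrt (((q+1)*c)^2) by
            rw [Real.sqrt_sq (by positivity)]]
          apply Real.sqrt_le_sqrt
          nlinarith [sq_nonneg c]

/-- for a Borel probability measure `μ` on `ℝ^q` with compact support `K`
(the smallest closed set of full measure), the lower quantization dimension is bounded by the
lower box dimension of `K` and the upper quantization dimension by the upper box dimension
of `K`. -/
theorem quantDim_le_boxDim (q : ℕ) (r : ℝ) (hr : 0 < r)
    (μ : Measure (EuclideanSpace ℝ (Fin q))) [IsProbabilityMeasure μ]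
    (K : Set (EuclideanSpace ℝ (Fin q))) (hKc : IsCompact K) (hKcl : IsClosed K)
    (hμK : μ Kᶜ = 0)
    (hmin : ∀ F : Set (EuclideanSpace ℝ (Fin q)), IsClosed F → μ Fᶜ = 0 → K ⊆ F) :
    lowerQuantDim μ r ≤ lowerBoxDim K ∧ upperQuantDim μ r ≤ upperBoxDim K := by
  set f : ℕ → ℝ := fun n => Real.log n / (- Real.log (quantError μ r n)) with hf
  set g : ℝ → ℝ := fun ε => Real.log (coverNum K ε) / (- Real.log ε) with hg
  -- K is nonempty
  have hKne : K.Nonempty := by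
    rcases K.eq_empty_or_nonempty with h | h
    · exfalso
      rw [h, Set.compl_empty] at hμK
      exact one_ne_zero ((measure_univ (μ := μ)).symm.trans hμK)
    · exact h
  -- (1) quantization error bounded by covering radius
  have hqe_le : ∀ ε : ℝ, 0 < ε → ∀ n : ℕ, coverNum K ε ≤ n → quantError μ r n ≤ ε := by
    intro ε hε n hn
    obtain ⟨t, htc, hcov⟩ := coverNum_spec hKc hε
    have htne : 1 ≤ t.card := by
      obtain ⟨x, hx⟩ := hKne
      obtain ⟨y, hy, -⟩ := Set.mem_iUnion₂.1 (hcov hx)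
      exact Finset.card_pos.2 ⟨y, hy⟩
    exact quantError_le_of_cover μ hr hμK hε t htne (htc.trans hn) hcov
  -- (2) bound on f n
  have hfb : ∀ ε : ℝ, 0 < ε → ε < 1 → ∀ n : ℕ, 1 ≤ n → coverNum K ε ≤ n →
      f n ≤ Real.log n / (-Real.log ε) := by
    intro ε hε hε1 n hn hcov
    have he0 := quantError_nonneg μ r n
    have heε := hqe_le ε hε n hcov
    have hlogn : 0 ≤ Real.log n := Real.log_natCast_nonneg n
    have hlogε : 0 < -Real.log ε := by
      have := Real.log_neg hε hε1; linarith
    rcases eq_or_lt_of_le he0 with he | he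
    · have : f n = 0 := by simp [hf, ← he]
      rw [this]
      exact div_nonneg hlogn hlogε.le
    · have hmono : -Real.log ε ≤ -Real.log (quantError μ r n) := by
        have := Real.log_le_log he heε; linarith
      have hlq : 0 < -Real.log (quantError μ r n) := lt_of_lt_of_le hlogε hmono
      simp only [hf]
      exact div_le_div_of_nonneg_left hlogn hlogε hmono
  -- (3) f is eventually nonnegative
  have hf0 : ∀ᶠ n : ℕ in atTop, 0 ≤ f n := by
    filter_upwards [eventually_ge_atTop (max 1 (coverNum K (1/2)))] with n hn
    have h1 : 1 ≤ n := le_trans (le_max_left _ _) hn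
    have hc : coverNum K (1/2) ≤ n := le_trans (le_max_right _ _) hn
    have heε := hqe_le (1/2) (by norm_num) n hc
    have he0 := quantError_nonneg μ r n
    rcases eq_or_lt_of_le he0 with he | he
    · simp [hf, ← he]
    · have hlogneg : Real.log (quantError μ r n) < 0 :=
        Real.log_neg he (lt_of_le_of_lt heε (by norm_num))
      exact div_nonneg (Real.log_natCast_nonneg n) (by linarith)
  have hf_cob_le : IsCoboundedUnder (· ≤ ·) atTop f :=
    isCoboundedUnder_le_of_eventually_le atTop hf0
  have hf_bdd_ge : IsBoundedUnder (· ≥ ·) atTop f := ⟨0, hf0⟩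
  -- (4) covering number polynomial bound
  obtain ⟨R₀, hR₀⟩ := hKc.isBounded.subset_closedBall 0
  set R : ℝ := max R₀ 0 with hRdef
  have hR : 0 ≤ R := le_max_right _ _
  have hKR : K ⊆ closedBall 0 R :=
    hR₀.trans (closedBall_subset_closedBall (le_max_left _ _))
  set A : ℝ := 2*R*(q+1) + 5 with hA
  have hA1 : (1:ℝ) ≤ A := by
    have : (0:ℝ) ≤ 2*R*(q+1) := by positivity
    simp only [hA]; linarith
  have hgB : ∀ ε : ℝ, 0 < ε → ε < 1 →
      Real.log (coverNum K ε) ≤ q * (Real.log A - Real.log ε) := by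
    intro ε hε hε1
    obtain ⟨t, htcard, htcov⟩ := grid_cover q R hR hε
    have hcN : (coverNum K ε : ℝ) ≤ (A/ε)^q := by
      have h1 : (coverNum K ε : ℝ) ≤ (t.card : ℝ) := by
        exact_mod_cast coverNum_le t (hKR.trans htcov)
      have h2 : 2*R*(q+1)/ε + 5 ≤ A/ε := by
        have h5 : (5:ℝ) ≤ 5/ε := by
          rw [le_div_iff₀ hε]; linarith
        have : A/ε = 2*R*(q+1)/ε + 5/ε := by rw [hA]; ring
        linarith
      calc (coverNum K ε : ℝ) ≤ (2*R*(q+1)/ε + 5)^q := h1.trans htcard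
        _ ≤ (A/ε)^q := pow_le_pow_left₀ (by positivity) h2 q
    have hcNpos : (0:ℝ) < (coverNum K ε : ℝ) := by
      exact_mod_cast one_le_coverNum hKne hKc hε
    calc Real.log (coverNum K ε) ≤ Real.log ((A/ε)^q) := Real.log_le_log hcNpos hcN
      _ = q * Real.log (A/ε) := by rw [Real.log_pow]
      _ = q * (Real.log A - Real.log ε) := by
          rw [Real.log_div (by linarith) hε.ne']
  -- (5) g is eventually bounded above
  set B : ℝ := q * Real.log A + q with hB
  have hδB : (0:ℝ) < min 1 (Real.exp (-1)) := lt_min one_pos (Real.exp_pos _)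
  have hg_ev_le_B : ∀ᶠ ε in nhdsWithin (0:ℝ) (Set.Ioi 0), g ε ≤ B := by
    filter_upwards [Ioo_mem_nhdsGT_of_mem
      (show (0:ℝ) ∈ Set.Ico 0 (min 1 (Real.exp (-1))) from ⟨le_rfl, hδB⟩)] with ε hε
    obtain ⟨hε0, hεlt⟩ := hε
    have hε1 : ε < 1 := lt_of_lt_of_le hεlt (min_le_left _ _)
    have hεe : ε < Real.exp (-1) := lt_of_lt_of_le hεlt (min_le_right _ _)
    have hlogε : 1 ≤ -Real.log ε := by
      have := Real.log_lt_log hε0 hεe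
      rw [Real.log_exp] at this
      linarith
    have hlogεpos : 0 < -Real.log ε := by linarith
    have hlogA : 0 ≤ Real.log A := Real.log_nonneg hA1
    have hmain := hgB ε hε0 hε1
    simp only [hg]
    rw [div_le_iff₀ hlogεpos]
    have hq0 : (0:ℝ) ≤ q := Nat.cast_nonneg q
    calc Real.log (coverNum K ε) ≤ q * (Real.log A - Real.log ε) := hmain
      _ = q * Real.log A + q * (-Real.log ε) := by ring
      _ ≤ q * Real.log A * (-Real.log ε) + q * (-Real.log ε) := by
          have hx := mul_le_mul_of_nonneg_left hlogε
            (show (0:ℝ) ≤ (q:ℝ) * Real.log A by positivity)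
          linarith
      _ = B * (-Real.log ε) := by rw [hB]; ring
  -- (6) g is eventually nonnegative
  have hg_ev_nonneg : ∀ᶠ ε in nhdsWithin (0:ℝ) (Set.Ioi 0), 0 ≤ g ε := by
    filter_upwards [Ioo_mem_nhdsGT_of_mem
      (show (0:ℝ) ∈ Set.Ico (0:ℝ) 1 from ⟨le_rfl, one_pos⟩)] with ε hε
    obtain ⟨hε0, hε1⟩ := hε
    have h1 : (0:ℝ) ≤ Real.log (coverNum K ε) := by
      have := one_le_coverNum hKne hKc hε0
      apply Real.log_nonneg
      exact_mod_cast this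
    have h2 : 0 < -Real.log ε := by
      have := Real.log_neg hε0 hε1; linarith
    exact div_nonneg h1 h2.le
  have hg_bdd : IsBoundedUnder (· ≤ ·) (nhdsWithin (0:ℝ) (Set.Ioi 0)) g := ⟨B, hg_ev_le_B⟩
  have hg_cob_ge : IsCoboundedUnder (· ≥ ·) (nhdsWithin (0:ℝ) (Set.Ioi 0)) g :=
    hg_bdd.isCoboundedUnder_ge
  -- (7) covering number vs power bound
  have hNεle : ∀ s : ℝ, 0 < s → ∀ ε : ℝ, 0 < ε → ε < 1 → g ε < s →
      (coverNum K ε : ℝ) ≤ ε ^ (-s) := by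
    intro s hs ε hε0 hε1 hgε
    have hlogε : 0 < -Real.log ε := by
      have := Real.log_neg hε0 hε1; linarith
    have hlt : Real.log (coverNum K ε) < s * (-Real.log ε) := by
      rw [hg, div_lt_iff₀ hlogε] at hgε
      exact hgε
    have hcNpos : (0:ℝ) < (coverNum K ε : ℝ) := by
      exact_mod_cast one_le_coverNum hKne hKc hε0
    calc (coverNum K ε : ℝ) = Real.exp (Real.log (coverNum K ε)) :=
          (Real.exp_log hcNpos).symm
      _ ≤ Real.exp (Real.log ε * (-s)) := by
          apply Real.exp_le_exp.2
          have : s * (-Real.log ε) = Real.log ε * (-s) := by ring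
          linarith
      _ = ε ^ (-s) := (Real.rpow_def_of_pos hε0 _).symm
  constructor
  · -- lower: liminf f ≤ liminf g
    show liminf f atTop ≤ liminf g (nhdsWithin 0 (Set.Ioi 0))
    apply le_of_forall_gt_imp_ge_of_dense
    intro s' hs'
    have h0g : (0:ℝ) ≤ liminf g (nhdsWithin 0 (Set.Ioi 0)) :=
      le_liminf_of_le hg_cob_ge hg_ev_nonneg
    obtain ⟨s, hs1, hs2⟩ := exists_between hs'
    have hs0 : 0 < s := lt_of_le_of_lt h0g hs1
    have hfreq : ∃ᶠ ε in nhdsWithin (0:ℝ) (Set.Ioi 0), g ε < s :=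
      frequently_lt_of_liminf_lt hg_cob_ge hs1
    refine liminf_le_of_frequently_le ?_ hf_bdd_ge
    rw [frequently_atTop]
    intro m
    set δ : ℝ := min (((m:ℝ)+1) ^ (-(1/s)))
      (min (Real.exp (-(Real.log 2 / (s' - s)))) (1/2)) with hδ
    have hδpos : 0 < δ := by
      apply lt_min
      · exact Real.rpow_pos_of_pos (by positivity) _
      · exact lt_min (Real.exp_pos _) (by norm_num)
    obtain ⟨ε, hgε, hεmem⟩ := (hfreq.and_eventually (eventually_mem_set.2
      (Ioo_mem_nhdsGT_of_mem (show (0:ℝ) ∈ Set.Ico 0 δ from ⟨le_rfl, hδpos⟩)))).exists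
    obtain ⟨hε0, hεδ⟩ := hεmem
    have hε1 : ε < 1 := by
      have : δ ≤ 1/2 := le_trans (min_le_right _ _) (min_le_right _ _)
      linarith
    have hcov : (coverNum K ε : ℝ) ≤ ε ^ (-s) := hNεle s hs0 ε hε0 hε1 hgε
    have hone : (1:ℝ) ≤ ε ^ (-s) :=
      Real.one_le_rpow_of_pos_of_le_one_of_nonpos hε0 hε1.le (by linarith)
    -- the chosen n
    set n : ℕ := ⌈ε ^ (-s)⌉₊ with hn
    have hεsm : ((m:ℝ)+1) ≤ ε ^ (-s) := by
      have hδ1 : ε < ((m:ℝ)+1) ^ (-(1/s)) := lt_of_lt_of_le hεδ (min_le_left _ _)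
      have := Real.rpow_lt_rpow_of_neg (z := -s) hε0 hδ1 (neg_lt_zero.2 (by positivity))
      have hcalc : (((m:ℝ)+1) ^ (-(1/s))) ^ (-s) = (m:ℝ)+1 := by
        rw [← Real.rpow_mul (by positivity)]
        rw [show (-(1/s)) * (-s) = 1 by field_simp]
        exact Real.rpow_one _
      rw [hcalc] at this
      linarith
    have hmn : m ≤ n := by
      have h1 : ((m:ℝ)+1) ≤ (n:ℝ) := hεsm.trans (Nat.le_ceil _)
      have : (m:ℝ) ≤ (n:ℝ) := by linarith
      exact_mod_cast this
    have hn1 : 1 ≤ n := Nat.one_le_iff_ne_zero.2 (by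
      have : (0:ℝ) < ε ^ (-s) := by linarith
      simp [hn, Nat.ceil_eq_zero, not_le, this])
    have hcovn : coverNum K ε ≤ n := by
      have : (coverNum K ε : ℝ) ≤ (n : ℝ) := hcov.trans (Nat.le_ceil _)
      exact_mod_cast this
    refine ⟨n, hmn, ?_⟩
    have hfbn := hfb ε hε0 hε1 n hn1 hcovn
    -- now bound log n / (-log ε) by s'
    have hlogε : 0 < -Real.log ε := by
      have := Real.log_neg hε0 hε1; linarith
    have hlog2 : Real.log 2 < (s' - s) * (-Real.log ε) := by
      have hεe : ε < Real.exp (-(Real.log 2 / (s' - s))) :=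
        lt_of_lt_of_le hεδ (le_trans (min_le_right _ _) (min_le_left _ _))
      have := Real.log_lt_log hε0 hεe
      rw [Real.log_exp] at this
      have hss : 0 < s' - s := by linarith
      rw [show (-(Real.log 2 / (s' - s))) = -(Real.log 2 / (s' - s)) from rfl] at this
      have h2 : Real.log 2 / (s' - s) < -Real.log ε := by linarith
      calc Real.log 2 = (Real.log 2 / (s' - s)) * (s' - s) := by field_simp
        _ < (-Real.log ε) * (s' - s) := by
            apply mul_lt_mul_of_pos_right h2 hss
        _ = (s' - s) * (-Real.log ε) := by ring
    have hlogn : Real.log n ≤ Real.log 2 + s * (-Real.log ε) := by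
      have hnle : (n:ℝ) ≤ 2 * ε ^ (-s) := by
        have := Nat.ceil_lt_add_one (show (0:ℝ) ≤ ε ^ (-s) by linarith)
        rw [← hn] at this
        linarith
      have hnpos : (0:ℝ) < (n:ℝ) := by exact_mod_cast hn1
      calc Real.log n ≤ Real.log (2 * ε ^ (-s)) := Real.log_le_log hnpos hnle
        _ = Real.log 2 + Real.log (ε ^ (-s)) := Real.log_mul (by norm_num)
            (by positivity)
        _ = Real.log 2 + (-s) * Real.log ε := by rw [Real.log_rpow hε0]
        _ = Real.log 2 + s * (-Real.log ε) := by ring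
    have hfinal : Real.log n / (-Real.log ε) ≤ s' := by
      rw [div_le_iff₀ hlogε]
      nlinarith
    exact hfbn.trans hfinal
  · -- upper: limsup f ≤ limsup g
    show limsup f atTop ≤ limsup g (nhdsWithin 0 (Set.Ioi 0))
    apply le_of_forall_gt_imp_ge_of_dense
    intro s hs
    have h0g : (0:ℝ) ≤ limsup g (nhdsWithin 0 (Set.Ioi 0)) :=
      le_limsup_of_frequently_le hg_ev_nonneg.frequently hg_bdd
    have hs0 : 0 < s := lt_of_le_of_lt h0g hs
    have hev : ∀ᶠ ε in nhdsWithin (0:ℝ) (Set.Ioi 0), g ε < s :=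
      eventually_lt_of_limsup_lt hs hg_bdd
    have hm : ∀ᶠ ε in nhdsWithin (0:ℝ) (Set.Ioi 0), g ε < s ∧ ε < 1 := by
      refine hev.and ?_
      filter_upwards [Ioo_mem_nhdsGT_of_mem
        (show (0:ℝ) ∈ Set.Ico (0:ℝ) 1 from ⟨le_rfl, one_pos⟩)] with ε hε using hε.2
    rw [Filter.eventually_iff, mem_nhdsGT_iff_exists_Ioo_subset] at hm
    obtain ⟨u, hu, hsub⟩ := hm
    have hupos : (0:ℝ) < u := hu
    -- now eventually in n
    have htend : Tendsto (fun n : ℕ => (n:ℝ) ^ (-(1/s))) atTop (nhds 0) :=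
      (tendsto_rpow_neg_atTop (by positivity)).comp tendsto_natCast_atTop_atTop
    have hev2 : ∀ᶠ n : ℕ in atTop, (n:ℝ) ^ (-(1/s)) < u :=
      htend.eventually_lt_const hupos
    have hevf : ∀ᶠ n : ℕ in atTop, f n ≤ s := by
      filter_upwards [hev2, eventually_ge_atTop 1] with n hnu h1n
      set ε' : ℝ := (n:ℝ) ^ (-(1/s)) with hε'
      have hnpos : (0:ℝ) < (n:ℝ) := by exact_mod_cast h1n
      have hε'pos : 0 < ε' := Real.rpow_pos_of_pos hnpos _
      have hmemu : ε' ∈ Set.Ioo (0:ℝ) u := ⟨hε'pos, hnu⟩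
      obtain ⟨hgε', hε'1⟩ := hsub hmemu
      have hcov : (coverNum K ε' : ℝ) ≤ ε' ^ (-s) := hNεle s hs0 ε' hε'pos hε'1 hgε'
      have hcalc : ε' ^ (-s) = (n:ℝ) := by
        rw [hε', ← Real.rpow_mul hnpos.le]
        rw [show (-(1/s)) * (-s) = 1 by field_simp]
        exact Real.rpow_one _
      have hcovn : coverNum K ε' ≤ n := by
        have : (coverNum K ε' : ℝ) ≤ (n:ℝ) := by rw [← hcalc]; exact hcov
        exact_mod_cast this
      have hfbn := hfb ε' hε'pos hε'1 n h1n hcovn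
      have hlogε' : -Real.log ε' = (1/s) * Real.log n := by
        rw [hε', Real.log_rpow hnpos]
        ring
      rcases eq_or_lt_of_le (Real.log_natCast_nonneg n) with hL | hL
      · have h0 : Real.log n / (-Real.log ε') = 0 := by
          rw [hlogε', ← hL, mul_zero, div_zero]
        rw [h0] at hfbn
        exact hfbn.trans hs0.le
      · have : Real.log n / (-Real.log ε') = s := by
          rw [hlogε']
          field_simp
        rw [this] at hfbn
        exact hfbn
    exact limsup_le_of_le hf_cob_le hevf
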